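/- Let f:[0,R)→ℝ be continuously differentiable with f(0)=0, f'(0)=−1, f' convex and strictly increasing, let c≥0, β>0, κ≥0 with [(1+√2)κ+1]·c·β·D⁺f'(0) < 1, and ν = sup{t∈[0,R): f'(t)<0}. Then ρ := sup{t∈(0,ν): ([f'(t)+1+κ][t f'(t)−f(t)+cβ(1+√2)(f'(t)+1)] + cβ[f'(t)+1])/(t·f'(t)²) < 1} is positive, and the displayed inequality holds for all t∈(0,ρ). -/

import Mathlib

open Set Filter Topology
set_option maxHeartbeats 1000000

lemma combo_lemma {s : Set ℝ} {h : ℝ → ℝ} (hc : ConvexOn ℝ s h)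
    (hm : MonotoneOn h s) {a x y b : ℝ} (ha : a ∈ s) (hb : b ∈ s)
    (hax : a ≤ x) (hxb : x ≤ b) (hay : a ≤ y)
    (hyb : y ≤ b) (hsum : x + y ≤ a + b) : h x + h y ≤ h a + h b := by
  rcases eq_or_lt_of_le (hax.trans hxb) with hab | hab
  · have hxa : x = a := le_antisymm (hab ▸ hxb) hax
    have hya : y = a := le_antisymm (hab ▸ hyb) hay
    rw [hxa, hya, ← hab]
  · have hba : 0 < b - a := by linarith
    set l1 := (b - x) / (b - a) with hl1
    set l2 := (b - y) / (b - a) with hl2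
    have key : ∀ z : ℝ, a ≤ z → z ≤ b →
        h z ≤ (b - z) / (b - a) * h a + (1 - (b - z) / (b - a)) * h b := by
      intro z haz hzb
      have h0 : (0:ℝ) ≤ (b - z) / (b - a) := div_nonneg (by linarith) hba.le
      have h1 : (0:ℝ) ≤ 1 - (b - z) / (b - a) := by
        rw [sub_nonneg, div_le_one hba]; linarith
      have := hc.2 ha hb h0 h1 (by ring)
      simp only [smul_eq_mul] at this
      have hpt : (b - z) / (b - a) * a + (1 - (b - z) / (b - a)) * b = z := by
        field_simp; ring
      rwa [hpt] at this
    have hx1 := key x hax hxb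
    have hy1 := key y hay hyb
    have hla : h a ≤ h b := hm ha hb (by linarith)
    have hsum2 : 1 ≤ l1 + l2 := by
      rw [hl1, hl2, ← add_div, le_div_iff₀ hba]; linarith
    nlinarith [mul_nonneg (by linarith : (0:ℝ) ≤ l1 + l2 - 1)
      (by linarith : (0:ℝ) ≤ h b - h a)]

/-- Under the majorant hypotheses (h1), (h2) and the residual condition (h3),
the constant `ρ` is positive and the displayed inequality holds on `(0, ρ)`. -/
theorem stmt_9 (R : ℝ) (hR : 0 < R) (f f' : ℝ → ℝ)
    (hder : ∀ s ∈ Set.Ico 0 R, HasDerivAt f (f' s) s)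
    (hcont : ContinuousOn f' (Set.Ico 0 R))
    (h1₀ : f 0 = 0) (h1₁ : f' 0 = -1)
    (h2₀ : ConvexOn ℝ (Set.Ico 0 R) f')
    (h2₁ : StrictMonoOn f' (Set.Ico 0 R))
    (c β κ : ℝ) (hc : 0 ≤ c) (hβ : 0 < β) (hκ : 0 ≤ κ)
    (D : ℝ) (hD : HasDerivWithinAt f' D (Set.Ici 0) 0)
    (h3 : ((1 + Real.sqrt 2) * κ + 1) * c * β * D < 1)
    (ν ρ : ℝ) (hν : ν = sSup {t | t ∈ Set.Ico 0 R ∧ f' t < 0})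
    (hρ : ρ = sSup {t | t ∈ Set.Ioo 0 ν ∧
      ((f' t + 1 + κ) * (t * f' t - f t + c * β * (1 + Real.sqrt 2) * (f' t + 1))
          + c * β * (f' t + 1)) / (t * (f' t) ^ 2) < 1}) :
    0 < ρ ∧ ∀ t ∈ Set.Ioo 0 ρ,
      ((f' t + 1 + κ) * (t * f' t - f t + c * β * (1 + Real.sqrt 2) * (f' t + 1))
          + c * β * (f' t + 1)) / (t * (f' t) ^ 2) < 1 := by
  have hs2 : (0:ℝ) ≤ Real.sqrt 2 := Real.sqrt_nonneg 2
  have hmono := h2₁.monotoneOn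
  have hA0 : (0:ℝ) ∈ {t | t ∈ Set.Ico 0 R ∧ f' t < 0} := ⟨⟨le_rfl, hR⟩, by rw [h1₁]; norm_num⟩
  have hAbdd : BddAbove {t | t ∈ Set.Ico 0 R ∧ f' t < 0} := ⟨R, fun x hx => hx.1.2.le⟩
  have hνR : ν ≤ R := by rw [hν]; exact csSup_le ⟨0, hA0⟩ (fun x hx => hx.1.2.le)
  have hIoo : ∀ t ∈ Set.Ioo 0 ν, t < R ∧ f' t < 0 ∧ -1 < f' t := by
    intro t ht
    obtain ⟨a, haA, hta⟩ := exists_lt_of_lt_csSup ⟨0, hA0⟩ (hν ▸ ht.2)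
    have htR : t < R := hta.trans haA.1.2
    refine ⟨htR, lt_trans (h2₁ ⟨ht.1.le, htR⟩ haA.1 hta) haA.2, ?_⟩
    rw [← h1₁]; exact h2₁ ⟨le_rfl, hR⟩ ⟨ht.1.le, htR⟩ ht.1
  -- ν > 0
  have hν0 : 0 < ν := by
    have hcw : ContinuousWithinAt f' (Set.Ico 0 R) 0 := hcont 0 ⟨le_rfl, hR⟩
    have h1 : ∀ᶠ x in nhdsWithin 0 (Set.Ico 0 R), f' x < 0 := by
      have hT : Filter.Tendsto f' (nhdsWithin 0 (Set.Ico 0 R)) (nhds (-1)) := by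
        rw [← h1₁]; exact hcw
      exact hT.eventually_lt_const (by norm_num)
    have hle : nhdsWithin (0:ℝ) (Set.Ioi 0) ≤ nhdsWithin 0 (Set.Ico 0 R) :=
      nhdsWithin_le_of_mem (Filter.mem_of_superset
        (Ioo_mem_nhdsGT_of_mem ⟨le_rfl, hR⟩) Set.Ioo_subset_Ico_self)
    have h1' : ∀ᶠ x in nhdsWithin (0:ℝ) (Set.Ioi 0), f' x < 0 := hle h1
    have h2' : ∀ᶠ x in nhdsWithin (0:ℝ) (Set.Ioi 0), x ∈ Set.Ioo 0 R :=
      Ioo_mem_nhdsGT_of_mem ⟨le_rfl, hR⟩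
    obtain ⟨x, hx1, hx2⟩ := (h1'.and h2').exists
    rw [hν]
    exact lt_of_lt_of_le hx2.1 (le_csSup hAbdd ⟨⟨hx2.1.le, hx2.2⟩, hx1⟩)
  -- FTC and related facts
  have hfc : ∀ t, 0 ≤ t → t < R → ContinuousOn f (Set.Icc 0 t) := fun t ht htR x hx =>
    (hder x ⟨hx.1, lt_of_le_of_lt hx.2 htR⟩).continuousAt.continuousWithinAt
  have hintf' : ∀ t, 0 ≤ t → t < R → IntervalIntegrable f' MeasureTheory.volume 0 t := by
    intro t ht htR
    apply ContinuousOn.intervalIntegrable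
    apply hcont.mono
    rw [Set.uIcc_of_le ht]
    exact fun x hx => ⟨hx.1, lt_of_le_of_lt hx.2 htR⟩
  have hFTC : ∀ t, 0 ≤ t → t < R → ∫ x in (0:ℝ)..t, f' x = f t := by
    intro t ht htR
    have := intervalIntegral.integral_eq_sub_of_hasDerivAt (f := f) (f' := f')
      (fun x hx => by
        rw [Set.uIcc_of_le ht] at hx
        exact hder x ⟨hx.1, lt_of_le_of_lt hx.2 htR⟩)
      (hintf' t ht htR)
    rw [this, h1₀, sub_zero]
  have hfslope : ∀ t, 0 < t → t < R → -t ≤ f t ∧ f t ≤ t * f' t := by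
    intro t ht htR
    obtain ⟨ξ, hξ, hξeq⟩ := exists_hasDerivAt_eq_slope f f' ht (hfc t ht.le htR)
      (fun x hx => hder x ⟨hx.1.le, hx.2.trans htR⟩)
    rw [h1₀, sub_zero, sub_zero, eq_div_iff (ne_of_gt ht)] at hξeq
    have hξR : ξ ∈ Set.Ico 0 R := ⟨hξ.1.le, hξ.2.trans htR⟩
    have l1 : -1 < f' ξ := by rw [← h1₁]; exact h2₁ ⟨le_rfl, hR⟩ hξR hξ.1
    have l2 : f' ξ ≤ f' t := hmono hξR ⟨ht.le, htR⟩ hξ.2.le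
    constructor <;> nlinarith
  have hcompint : ∀ t, 0 < t → t < R →
      IntervalIntegrable (fun u => f' (u * t)) MeasureTheory.volume 0 1 := by
    intro t ht htR
    apply ContinuousOn.intervalIntegrable
    apply hcont.comp (Continuous.continuousOn (by continuity))
    intro u hu
    rw [Set.uIcc_of_le (by norm_num : (0:ℝ) ≤ 1)] at hu
    exact ⟨mul_nonneg hu.1 ht.le, lt_of_le_of_lt (by nlinarith [hu.2] : u * t ≤ t) htR⟩
  have havg : ∀ t, 0 < t → t < R → f t / t = ∫ u in (0:ℝ)..1, f' (u * t) := by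
    intro t ht htR
    rw [intervalIntegral.integral_comp_mul_right f' (ne_of_gt ht), zero_mul, one_mul,
      hFTC t ht.le htR, smul_eq_mul]
    rw [div_eq_inv_mul]
  -- monotonicity of A r = f' r - f r / r
  have hAmono : ∀ s t : ℝ, 0 < s → s ≤ t → t < R → f' s - f s / s ≤ f' t - f t / t := by
    intro s t hs hst htR
    have hsR : s < R := lt_of_le_of_lt hst htR
    have ht : 0 < t := lt_of_lt_of_le hs hst
    rw [havg s hs hsR, havg t ht htR]
    have hmint : (∫ u in (0:ℝ)..1, f' (u * t)) ≤
        ∫ u in (0:ℝ)..1, (f' t - f' s + f' (u * s)) := by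
      apply intervalIntegral.integral_mono_on (by norm_num) (hcompint t ht htR)
        (intervalIntegrable_const.add (hcompint s hs hsR))
      intro u hu
      have ha : u * s ∈ Set.Ico 0 R :=
        ⟨mul_nonneg hu.1 hs.le, lt_of_le_of_lt (by nlinarith [hu.2] : u * s ≤ s) hsR⟩
      have hb : t ∈ Set.Ico 0 R := ⟨ht.le, htR⟩
      have e1 : u * s ≤ u * t := mul_le_mul_of_nonneg_left hst hu.1
      have e2 : u * t ≤ t := by nlinarith [hu.2, ht.le]
      have e3 : u * s ≤ s := by nlinarith [hu.2, hs.le]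
      have e4 : u * t + s ≤ u * s + t := by
        nlinarith [mul_nonneg (sub_nonneg.2 hu.2) (sub_nonneg.2 hst)]
      have := combo_lemma h2₀ hmono (x := u * t) (y := s) ha hb e1 e2 e3 hst e4
      linarith
    have hconst : (∫ u in (0:ℝ)..1, (f' t - f' s + f' (u * s))) =
        (f' t - f' s) + ∫ u in (0:ℝ)..1, f' (u * s) := by
      rw [intervalIntegral.integral_add intervalIntegrable_const (hcompint s hs hsR),
        intervalIntegral.integral_const]
      simp
    rw [hconst] at hmint
    linarith
  -- monotonicity of B r = (f' r + 1)/r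
  have hBmono : ∀ s t : ℝ, 0 < s → s ≤ t → t < R → (f' s + 1) / s ≤ (f' t + 1) / t := by
    intro s t hs hst htR
    have ht : 0 < t := lt_of_lt_of_le hs hst
    have h0m : (0:ℝ) ∈ Set.Ico 0 R := ⟨le_rfl, hR⟩
    have htm : t ∈ Set.Ico 0 R := ⟨ht.le, htR⟩
    have h0l : (0:ℝ) ≤ 1 - s / t := by
      rw [sub_nonneg, div_le_one ht]; exact hst
    have h0r : (0:ℝ) ≤ s / t := div_nonneg hs.le ht.le
    have hcv := h2₀.2 h0m htm h0l h0r (by ring)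
    simp only [smul_eq_mul, mul_zero, zero_add, h1₁] at hcv
    have hpt : s / t * t = s := div_mul_cancel₀ s (ne_of_gt ht)
    rw [hpt] at hcv
    rw [div_le_div_iff₀ hs ht]
    have h4 : (1 - s / t) * (-1) + s / t * f' t = (-(t - s) + s * f' t) / t := by
      field_simp
    rw [h4, le_div_iff₀ ht] at hcv
    nlinarith [hcv]
  -- the auxiliary function G
  set G : ℝ → ℝ := fun r => (f' r + 1 + κ) *
      ((f' r - f r / r) + c * β * (1 + Real.sqrt 2) * ((f' r + 1) / r)) +
      c * β * ((f' r + 1) / r) with hGdef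
  have hid : ∀ t : ℝ, 0 < t → f' t ≠ 0 →
      ((f' t + 1 + κ) * (t * f' t - f t + c * β * (1 + Real.sqrt 2) * (f' t + 1))
          + c * β * (f' t + 1)) / (t * (f' t) ^ 2) = G t / (f' t) ^ 2 := by
    intro t ht hft
    rw [hGdef]
    field_simp
    try exact Or.inl trivial
  -- facts on Ioo 0 ν
  have hfacts : ∀ t ∈ Set.Ioo 0 ν, 0 ≤ f' t - f t / t ∧ 0 ≤ (f' t + 1) / t ∧
      0 ≤ f' t + 1 + κ := by
    intro t ht
    obtain ⟨htR, hneg, hgt⟩ := hIoo t ht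
    obtain ⟨hl, hr⟩ := hfslope t ht.1 htR
    refine ⟨?_, div_nonneg (by linarith) ht.1.le, by linarith⟩
    rw [sub_nonneg, div_le_iff₀ ht.1]
    linarith [hr]
  have hGnonneg : ∀ t ∈ Set.Ioo 0 ν, 0 ≤ G t := by
    intro t ht
    obtain ⟨hA, hB, hK⟩ := hfacts t ht
    rw [hGdef]
    have hcb : (0:ℝ) ≤ c * β := mul_nonneg hc hβ.le
    positivity
  have hGmono : ∀ s t : ℝ, s ∈ Set.Ioo 0 ν → t ∈ Set.Ioo 0 ν → s ≤ t → G s ≤ G t := by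
    intro s t hsm htm hst
    obtain ⟨hAs, hBs, hKs⟩ := hfacts s hsm
    obtain ⟨hAt, hBt, hKt⟩ := hfacts t htm
    obtain ⟨htR, hnegt, hgtt⟩ := hIoo t htm
    have hAm := hAmono s t hsm.1 hst htR
    have hBm := hBmono s t hsm.1 hst htR
    have hfm : f' s ≤ f' t := hmono ⟨hsm.1.le, lt_of_le_of_lt hst htR⟩ ⟨htm.1.le, htR⟩ hst
    have hcb : (0:ℝ) ≤ c * β := mul_nonneg hc hβ.le
    have hcb2 : (0:ℝ) ≤ c * β * (1 + Real.sqrt 2) := by positivity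
    rw [hGdef]
    have hq : (f' s - f s / s) + c * β * (1 + Real.sqrt 2) * ((f' s + 1) / s) ≤
        (f' t - f t / t) + c * β * (1 + Real.sqrt 2) * ((f' t + 1) / t) :=
      add_le_add hAm (mul_le_mul_of_nonneg_left hBm hcb2)
    have hq0 : 0 ≤ (f' s - f s / s) + c * β * (1 + Real.sqrt 2) * ((f' s + 1) / s) := by
      positivity
    have hpq := mul_le_mul (by linarith : f' s + 1 + κ ≤ f' t + 1 + κ) hq hq0 hKt
    have hr := mul_le_mul_of_nonneg_left hBm hcb
    linarith
  have hquot : ∀ s t : ℝ, s ∈ Set.Ioo 0 ν → t ∈ Set.Ioo 0 ν → s ≤ t →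
      G s / (f' s) ^ 2 ≤ G t / (f' t) ^ 2 := by
    intro s t hsm htm hst
    obtain ⟨hsR, hnegs, hgts⟩ := hIoo s hsm
    obtain ⟨htR, hnegt, hgtt⟩ := hIoo t htm
    have hfm : f' s ≤ f' t := hmono ⟨hsm.1.le, hsR⟩ ⟨htm.1.le, htR⟩ hst
    have h2s : 0 < (f' s) ^ 2 := by nlinarith
    have h2t : 0 < (f' t) ^ 2 := by nlinarith
    have h2le : (f' t) ^ 2 ≤ (f' s) ^ 2 := by nlinarith
    exact div_le_div₀ (hGnonneg t htm) (hGmono s t hsm htm hst) h2t h2le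
  -- limits as t → 0⁺
  have hmemIoo : ∀ᶠ x in nhdsWithin (0:ℝ) (Set.Ioi 0), x ∈ Set.Ioo 0 ν :=
    Ioo_mem_nhdsGT_of_mem ⟨le_rfl, hν0⟩
  have htf : Filter.Tendsto f' (nhdsWithin (0:ℝ) (Set.Ioi 0)) (nhds (-1)) := by
    have hcw : ContinuousWithinAt f' (Set.Ici 0) 0 := hD.continuousWithinAt
    rw [ContinuousWithinAt, h1₁] at hcw
    exact hcw.mono_left (nhdsWithin_mono _ Set.Ioi_subset_Ici_self)
  have htB : Filter.Tendsto (fun t => (f' t + 1) / t) (nhdsWithin (0:ℝ) (Set.Ioi 0))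
      (nhds D) := by
    have h0 := hD
    rw [hasDerivWithinAt_iff_tendsto_slope, Set.Ici_sdiff_left] at h0
    refine Filter.Tendsto.congr' ?_ h0
    filter_upwards [self_mem_nhdsWithin] with x hx
    rw [slope_def_field, h1₁]
    rw [sub_neg_eq_add, sub_zero]
  have htA : Filter.Tendsto (fun t => f' t - f t / t) (nhdsWithin (0:ℝ) (Set.Ioi 0))
      (nhds 0) := by
    have hup : Filter.Tendsto (fun t => f' t + 1) (nhdsWithin (0:ℝ) (Set.Ioi 0))
        (nhds 0) := by
      have := htf.add_const 1
      norm_num at this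
      exact this
    apply tendsto_of_tendsto_of_tendsto_of_le_of_le' tendsto_const_nhds hup
    · filter_upwards [hmemIoo] with t ht
      exact (hfacts t ht).1
    · filter_upwards [hmemIoo] with t ht
      obtain ⟨htR, hneg, hgt⟩ := hIoo t ht
      obtain ⟨hl, hr⟩ := hfslope t ht.1 htR
      have : (-1:ℝ) ≤ f t / t := by
        rw [le_div_iff₀ ht.1]; linarith
      linarith
  have htGlim : Filter.Tendsto G (nhdsWithin (0:ℝ) (Set.Ioi 0))
      (nhds (κ * (0 + c * β * (1 + Real.sqrt 2) * D) + c * β * D)) := by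
    rw [hGdef]
    have e1 : Filter.Tendsto (fun t => f' t + 1 + κ) (nhdsWithin (0:ℝ) (Set.Ioi 0))
        (nhds κ) := by
      have := (htf.add_const 1).add_const κ
      norm_num at this
      exact this
    have e2 : Filter.Tendsto
        (fun t => (f' t - f t / t) + c * β * (1 + Real.sqrt 2) * ((f' t + 1) / t))
        (nhdsWithin (0:ℝ) (Set.Ioi 0)) (nhds (0 + c * β * (1 + Real.sqrt 2) * D)) :=
      htA.add (htB.const_mul _)
    exact (e1.mul e2).add (htB.const_mul (c * β))
  have htd : Filter.Tendsto (fun t => (f' t) ^ 2) (nhdsWithin (0:ℝ) (Set.Ioi 0))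
      (nhds 1) := by
    have := htf.pow 2
    norm_num at this
    exact this
  have htg : Filter.Tendsto (fun t => G t / (f' t) ^ 2) (nhdsWithin (0:ℝ) (Set.Ioi 0))
      (nhds ((κ * (0 + c * β * (1 + Real.sqrt 2) * D) + c * β * D) / 1)) :=
    htGlim.div htd one_ne_zero
  have hlt1 : (κ * (0 + c * β * (1 + Real.sqrt 2) * D) + c * β * D) / 1 < 1 := by
    rw [div_one]
    have heq : κ * (0 + c * β * (1 + Real.sqrt 2) * D) + c * β * D =
        ((1 + Real.sqrt 2) * κ + 1) * c * β * D := by ring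
    rw [heq]; exact h3
  have hev : ∀ᶠ t in nhdsWithin (0:ℝ) (Set.Ioi 0), G t / (f' t) ^ 2 < 1 :=
    htg.eventually_lt_const hlt1
  obtain ⟨t₀, ht₀Ioo, ht₀lt⟩ := (hmemIoo.and hev).exists
  set S : Set ℝ := {t | t ∈ Set.Ioo 0 ν ∧
      ((f' t + 1 + κ) * (t * f' t - f t + c * β * (1 + Real.sqrt 2) * (f' t + 1))
          + c * β * (f' t + 1)) / (t * (f' t) ^ 2) < 1} with hSdef
  have ht₀S : t₀ ∈ S := by
    refine ⟨ht₀Ioo, ?_⟩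
    rw [hid t₀ ht₀Ioo.1 (ne_of_lt (hIoo t₀ ht₀Ioo).2.1)]
    exact ht₀lt
  have hSbdd : BddAbove S := ⟨ν, fun x hx => hx.1.2.le⟩
  constructor
  · rw [hρ]
    exact lt_of_lt_of_le ht₀Ioo.1 (le_csSup hSbdd ht₀S)
  · intro t ht
    obtain ⟨s, hsS, hts⟩ := exists_lt_of_lt_csSup ⟨t₀, ht₀S⟩ (hρ ▸ ht.2)
    have htIoo : t ∈ Set.Ioo 0 ν := ⟨ht.1, hts.trans hsS.1.2⟩
    have hmt := hquot t s htIoo hsS.1 hts.le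
    have hs2' := hsS.2
    rw [hid s hsS.1.1 (ne_of_lt (hIoo s hsS.1).2.1)] at hs2'
    rw [hid t htIoo.1 (ne_of_lt (hIoo t htIoo).2.1)]
    exact lt_of_le_of_lt hmt hs2'
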